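/- The function u(x,t) = c d (k² − (k̄)²) / ( |k|² [ k̄ |d|² e^{−i(k²x + t/k²)} − k |c|² e^{−i((k̄)²x + t/(k̄)²)} ] ) satisfies the Fokas-Lenells equation u_{xt} + u − 2i|u|²u_x = 0 at every point where the denominator is nonzero, for any k ∈ ℂ with Re(k)·Im(k) ≠ 0 and any nonzero c, d ∈ ℂ. -/

import Mathlib

open Complex

noncomputable def dX (f : ℝ → ℝ → ℂ) (x t : ℝ) : ℂ := deriv (fun x' => f x' t) x
noncomputable def dT (f : ℝ → ℝ → ℂ) (x t : ℝ) : ℂ := deriv (fun t' => f x t') t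

/-- The one-soliton solution of the Fokas-Lenells equation. -/
noncomputable def oneSoliton (k c d : ℂ) (x t : ℝ) : ℂ :=
  c * d * (k ^ 2 - (starRingEnd ℂ k) ^ 2) /
    (((Complex.normSq k : ℝ) : ℂ) *
      (starRingEnd ℂ k * ((Complex.normSq d : ℝ) : ℂ) *
          Complex.exp (-I * (k ^ 2 * (x : ℂ) + (t : ℂ) / k ^ 2))
        - k * ((Complex.normSq c : ℝ) : ℂ) *
          Complex.exp (-I * ((starRingEnd ℂ k) ^ 2 * (x : ℂ) + (t : ℂ) / (starRingEnd ℂ k) ^ 2))))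

noncomputable def Dfun (k c d : ℂ) (x t : ℝ) : ℂ :=
  ((Complex.normSq k : ℝ) : ℂ) *
      (starRingEnd ℂ k * ((Complex.normSq d : ℝ) : ℂ) *
          Complex.exp (-I * (k ^ 2 * (x : ℂ) + (t : ℂ) / k ^ 2))
        - k * ((Complex.normSq c : ℝ) : ℂ) *
          Complex.exp (-I * ((starRingEnd ℂ k) ^ 2 * (x : ℂ) + (t : ℂ) / (starRingEnd ℂ k) ^ 2)))

noncomputable def DXf (k c d : ℂ) (x t : ℝ) : ℂ :=
  ((Complex.normSq k : ℝ) : ℂ) *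
      (starRingEnd ℂ k * ((Complex.normSq d : ℝ) : ℂ) *
          (-I * k ^ 2 * Complex.exp (-I * (k ^ 2 * (x : ℂ) + (t : ℂ) / k ^ 2)))
        - k * ((Complex.normSq c : ℝ) : ℂ) *
          (-I * (starRingEnd ℂ k) ^ 2 *
            Complex.exp (-I * ((starRingEnd ℂ k) ^ 2 * (x : ℂ) + (t : ℂ) / (starRingEnd ℂ k) ^ 2))))

lemma hd_expX (a b : ℂ) (x : ℝ) :
    HasDerivAt (fun x' : ℝ => Complex.exp (-I * (a * (x' : ℂ) + b)))
      (-I * a * Complex.exp (-I * (a * (x : ℂ) + b))) x := by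
  have h1 : HasDerivAt (fun z : ℂ => -I * (a * z + b)) (-I * a) (x : ℂ) := by
    simpa using (((hasDerivAt_id (x : ℂ)).const_mul a).add_const b).const_mul (-I)
  simpa [mul_comm] using h1.cexp.comp_ofReal

lemma hDfun_x (k c d : ℂ) (x t : ℝ) :
    HasDerivAt (fun x' => Dfun k c d x' t) (DXf k c d x t) x := by
  unfold Dfun DXf
  exact (((hd_expX (k ^ 2) ((t : ℂ) / k ^ 2) x).const_mul
        (starRingEnd ℂ k * ((Complex.normSq d : ℝ) : ℂ))).sub
      ((hd_expX ((starRingEnd ℂ k) ^ 2) ((t : ℂ) / (starRingEnd ℂ k) ^ 2) x).const_mul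
        (k * ((Complex.normSq c : ℝ) : ℂ)))).const_mul ((Complex.normSq k : ℝ) : ℂ)

lemma hsol_x (k c d : ℂ) (x t : ℝ) (h : Dfun k c d x t ≠ 0) :
    HasDerivAt (fun x' => oneSoliton k c d x' t)
      ((0 * Dfun k c d x t - c * d * (k ^ 2 - (starRingEnd ℂ k) ^ 2) * DXf k c d x t) /
        Dfun k c d x t ^ 2) x :=
  (hasDerivAt_const x (c * d * (k ^ 2 - (starRingEnd ℂ k) ^ 2))).div (hDfun_x k c d x t) h

lemma dX_eq (k c d : ℂ) (x t : ℝ) (h : Dfun k c d x t ≠ 0) :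
    dX (oneSoliton k c d) x t =
      (0 * Dfun k c d x t - c * d * (k ^ 2 - (starRingEnd ℂ k) ^ 2) * DXf k c d x t) /
        Dfun k c d x t ^ 2 :=
  (hsol_x k c d x t h).deriv

lemma Dfun_cont (k c d : ℂ) (x : ℝ) : Continuous (fun t' : ℝ => Dfun k c d x t') := by
  unfold Dfun; fun_prop

lemma hd_expT (a b : ℂ) (t : ℝ) :
    HasDerivAt (fun t' : ℝ => Complex.exp (-I * (b + (t' : ℂ) / a)))
      (-I / a * Complex.exp (-I * (b + (t : ℂ) / a))) t := by
  have h1 : HasDerivAt (fun z : ℂ => -I * (b + z / a)) (-I / a) (t : ℂ) := by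
    have := (((hasDerivAt_id (t : ℂ)).div_const a).const_add b).const_mul (-I)
    simpa [div_eq_mul_inv, mul_comm, mul_assoc] using this
  simpa [mul_comm] using h1.cexp.comp_ofReal

noncomputable def DTf (k c d : ℂ) (x t : ℝ) : ℂ :=
  ((Complex.normSq k : ℝ) : ℂ) *
      (starRingEnd ℂ k * ((Complex.normSq d : ℝ) : ℂ) *
          (-I / k ^ 2 * Complex.exp (-I * (k ^ 2 * (x : ℂ) + (t : ℂ) / k ^ 2)))
        - k * ((Complex.normSq c : ℝ) : ℂ) *
          (-I / (starRingEnd ℂ k) ^ 2 *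
            Complex.exp (-I * ((starRingEnd ℂ k) ^ 2 * (x : ℂ) + (t : ℂ) / (starRingEnd ℂ k) ^ 2))))

noncomputable def DXTf (k c d : ℂ) (x t : ℝ) : ℂ :=
  ((Complex.normSq k : ℝ) : ℂ) *
      (starRingEnd ℂ k * ((Complex.normSq d : ℝ) : ℂ) *
          (-I * k ^ 2 *
            (-I / k ^ 2 * Complex.exp (-I * (k ^ 2 * (x : ℂ) + (t : ℂ) / k ^ 2))))
        - k * ((Complex.normSq c : ℝ) : ℂ) *
          (-I * (starRingEnd ℂ k) ^ 2 *
            (-I / (starRingEnd ℂ k) ^ 2 *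
              Complex.exp (-I * ((starRingEnd ℂ k) ^ 2 * (x : ℂ) + (t : ℂ) / (starRingEnd ℂ k) ^ 2)))))

lemma hDfun_t (k c d : ℂ) (x t : ℝ) :
    HasDerivAt (fun t' => Dfun k c d x t') (DTf k c d x t) t := by
  unfold Dfun DTf
  exact (((hd_expT (k ^ 2) (k ^ 2 * (x : ℂ)) t).const_mul
        (starRingEnd ℂ k * ((Complex.normSq d : ℝ) : ℂ))).sub
      ((hd_expT ((starRingEnd ℂ k) ^ 2) ((starRingEnd ℂ k) ^ 2 * (x : ℂ)) t).const_mul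
        (k * ((Complex.normSq c : ℝ) : ℂ)))).const_mul ((Complex.normSq k : ℝ) : ℂ)

lemma hDXf_t (k c d : ℂ) (x t : ℝ) :
    HasDerivAt (fun t' => DXf k c d x t') (DXTf k c d x t) t := by
  unfold DXf DXTf
  exact ((((hd_expT (k ^ 2) (k ^ 2 * (x : ℂ)) t).const_mul (-I * k ^ 2)).const_mul
        (starRingEnd ℂ k * ((Complex.normSq d : ℝ) : ℂ))).sub
      (((hd_expT ((starRingEnd ℂ k) ^ 2) ((starRingEnd ℂ k) ^ 2 * (x : ℂ)) t).const_mul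
          (-I * (starRingEnd ℂ k) ^ 2)).const_mul
        (k * ((Complex.normSq c : ℝ) : ℂ)))).const_mul ((Complex.normSq k : ℝ) : ℂ)

lemma dTdX_eq (k c d : ℂ) (x t : ℝ) (h : Dfun k c d x t ≠ 0) :
    dT (dX (oneSoliton k c d)) x t =
      ((0 * DTf k c d x t - c * d * (k ^ 2 - (starRingEnd ℂ k) ^ 2) * DXTf k c d x t) *
          Dfun k c d x t ^ 2 -
        (0 * Dfun k c d x t - c * d * (k ^ 2 - (starRingEnd ℂ k) ^ 2) * DXf k c d x t) *
          (DTf k c d x t * Dfun k c d x t + Dfun k c d x t * DTf k c d x t)) /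
        (Dfun k c d x t ^ 2) ^ 2 := by
  have hev : ∀ᶠ t' in nhds t, Dfun k c d x t' ≠ 0 :=
    (Dfun_cont k c d x).continuousAt.eventually_ne h
  have h1 : (fun t' => dX (oneSoliton k c d) x t') =ᶠ[nhds t]
      (fun t' => (0 * Dfun k c d x t' -
          c * d * (k ^ 2 - (starRingEnd ℂ k) ^ 2) * DXf k c d x t') /
        Dfun k c d x t' ^ 2) :=
    hev.mono fun t' h' => dX_eq k c d x t' h'
  have hpow : HasDerivAt (fun t' => Dfun k c d x t' ^ 2)
      (DTf k c d x t * Dfun k c d x t + Dfun k c d x t * DTf k c d x t) t := by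
    simpa only [sq, Pi.mul_def] using (hDfun_t k c d x t).mul (hDfun_t k c d x t)
  have hnum : HasDerivAt (fun t' => 0 * Dfun k c d x t' -
      c * d * (k ^ 2 - (starRingEnd ℂ k) ^ 2) * DXf k c d x t')
      (0 * DTf k c d x t - c * d * (k ^ 2 - (starRingEnd ℂ k) ^ 2) * DXTf k c d x t) t :=
    ((hDfun_t k c d x t).const_mul 0).sub
      ((hDXf_t k c d x t).const_mul (c * d * (k ^ 2 - (starRingEnd ℂ k) ^ 2)))
  have hbig := hnum.div hpow (pow_ne_zero 2 h)
  unfold dT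
  rw [h1.deriv_eq]
  exact hbig.deriv

set_option maxHeartbeats 4000000 in
theorem oneSoliton_solves_FL (k c d : ℂ) (hk : k.re * k.im ≠ 0) (hc : c ≠ 0) (hd : d ≠ 0) :
    ∀ x t : ℝ,
      (((Complex.normSq k : ℝ) : ℂ) *
        (starRingEnd ℂ k * ((Complex.normSq d : ℝ) : ℂ) *
            Complex.exp (-I * (k ^ 2 * (x : ℂ) + (t : ℂ) / k ^ 2))
          - k * ((Complex.normSq c : ℝ) : ℂ) *
            Complex.exp (-I * ((starRingEnd ℂ k) ^ 2 * (x : ℂ) + (t : ℂ) / (starRingEnd ℂ k) ^ 2)))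
        ≠ 0) →
      dT (dX (oneSoliton k c d)) x t + oneSoliton k c d x t
        - 2 * I * (oneSoliton k c d x t * starRingEnd ℂ (oneSoliton k c d x t))
          * dX (oneSoliton k c d) x t = 0 := by
  intro x t hD
  have hD' : Dfun k c d x t ≠ 0 := hD
  have hk0 : k ≠ 0 := fun h => hk (by simp [h])
  have hkb0 : (starRingEnd ℂ) k ≠ 0 := fun h => hk0 (by simpa using congrArg (starRingEnd ℂ) h)
  have hDb : (starRingEnd ℂ) (Dfun k c d x t) ≠ 0 :=
    fun h => hD' (by simpa using congrArg (starRingEnd ℂ) h)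
  rw [dTdX_eq k c d x t hD', dX_eq k c d x t hD',
    show oneSoliton k c d x t = c * d * (k ^ 2 - (starRingEnd ℂ k) ^ 2) / Dfun k c d x t
      from rfl, map_div₀]
  unfold Dfun DXf DTf DXTf
  unfold Dfun at hD' hDb
  simp only [map_mul, map_sub, map_pow, map_add, map_div₀, map_neg, Complex.conj_I,
    Complex.conj_conj, Complex.conj_ofReal, ← Complex.exp_conj, neg_neg] at hDb ⊢
  have hC1 : Complex.exp (I * ((starRingEnd ℂ k) ^ 2 * (x : ℂ) + (t : ℂ) / (starRingEnd ℂ k) ^ 2))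
      = (Complex.exp (-I * ((starRingEnd ℂ k) ^ 2 * (x : ℂ) + (t : ℂ) / (starRingEnd ℂ k) ^ 2)))⁻¹ := by
    rw [← Complex.exp_neg]; congr 1; ring
  have hC2 : Complex.exp (I * (k ^ 2 * (x : ℂ) + (t : ℂ) / k ^ 2))
      = (Complex.exp (-I * (k ^ 2 * (x : ℂ) + (t : ℂ) / k ^ 2)))⁻¹ := by
    rw [← Complex.exp_neg]; congr 1; ring
  rw [hC1, hC2] at hDb ⊢
  set e1 := Complex.exp (-I * (k ^ 2 * (x : ℂ) + (t : ℂ) / k ^ 2)) with he1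
  set e2 := Complex.exp (-I * ((starRingEnd ℂ k) ^ 2 * (x : ℂ) + (t : ℂ) / (starRingEnd ℂ k) ^ 2))
    with he2
  have hE1 : e1 ≠ 0 := by rw [he1]; exact Complex.exp_ne_zero _
  have hE2 : e2 ≠ 0 := by rw [he2]; exact Complex.exp_ne_zero _
  have hS := right_ne_zero_of_mul hD'
  have hSb := right_ne_zero_of_mul hDb
  have hkey : (k * ((Complex.normSq d : ℝ) : ℂ) * e2⁻¹ -
      (starRingEnd ℂ) k * ((Complex.normSq c : ℝ) : ℂ) * e1⁻¹) =
      (k * ((Complex.normSq d : ℝ) : ℂ) * e1 -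
        (starRingEnd ℂ) k * ((Complex.normSq c : ℝ) : ℂ) * e2) / (e1 * e2) := by
    field_simp
  rw [hkey] at hSb ⊢
  have hSb2 : (k * ((Complex.normSq d : ℝ) : ℂ) * e1 -
      (starRingEnd ℂ) k * ((Complex.normSq c : ℝ) : ℂ) * e2) ≠ 0 := by
    intro h
    rw [h, zero_div] at hSb
    exact hSb rfl
  simp only [← Complex.mul_conj] at hS hSb2 ⊢
  set S := (starRingEnd ℂ) k * (d * (starRingEnd ℂ) d) * e1 -
      k * (c * (starRingEnd ℂ) c) * e2 with hSdef
  set Sb := k * (d * (starRingEnd ℂ) d) * e1 -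
      (starRingEnd ℂ) k * (c * (starRingEnd ℂ) c) * e2 with hSbdef
  clear_value S Sb e1 e2
  field_simp [hS, hSb2, hk0, hkb0, hE1, hE2]
  have hq1 : k ^ 2 * (starRingEnd ℂ) k ^ 2 * (k ^ 2 * (starRingEnd ℂ) k ^ 2) *
      ((k * (starRingEnd ℂ) k * S) ^ 2) ^ 2 * (k * (starRingEnd ℂ) k * S) ≠ 0 := by
    simp [hk0, hkb0, hS, pow_eq_zero_iff, mul_eq_zero]
  have hq2 : k * (starRingEnd ℂ) k * S * (k * (starRingEnd ℂ) k * Sb) *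
      (k * (starRingEnd ℂ) k * S) ^ 2 ≠ 0 := by
    simp [hk0, hkb0, hS, hSb2, pow_eq_zero_iff, mul_eq_zero]
  rw [hSdef, hSbdef]
  ring_nf
  simp only [Complex.I_sq, Complex.I_pow_four, show (I : ℂ) ^ 3 = -I by
    rw [pow_succ, Complex.I_sq]; ring]
  ring
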